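/- Let g = su(2) ⊕ su(2) ⊕ su(2) and let h = {(C,C,C) : C ∈ su(2)} be the diagonal subalgebra. For real numbers a, b, c, d, let m₁ = {(A, aA, bA) : A ∈ su(2)} and m₂ = {(B, cB, dB) : B ∈ su(2)}, and m = m₁ + m₂. Then g = h ⊕ m (direct sum of vector spaces) if and only if Δ := (a-1)(d-1) - (b-1)(c-1) ≠ 0. -/

import Mathlib

/- STATEMENT 17: Let g = su(2) ⊕ su(2) ⊕ su(2), h the diagonal {(C,C,C)}, and for reals
a, b, c, d let m₁ = {(A, aA, bA)}, m₂ = {(B, cB, dB)}, m = m₁ + m₂. Then g = h ⊕ m as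
vector spaces if and only if Δ := (a-1)(d-1) - (b-1)(c-1) ≠ 0. -/

open Matrix

attribute [local instance 100] LieRing.ofAssociativeRing

noncomputable section

/-- su(2): traceless skew-Hermitian complex 2×2 matrices, as a real Lie algebra -/
def su2 : LieSubalgebra ℝ (Matrix (Fin 2) (Fin 2) ℂ) where
  carrier := {A | Aᴴ = -A ∧ A.trace = 0}
  add_mem' := by
    rintro x y ⟨h1, h2⟩ ⟨g1, g2⟩
    constructor
    · simp [Matrix.conjTranspose_add, h1, g1]; abel
    · simp [Matrix.trace_add, h2, g2]
  zero_mem' := by simp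
  smul_mem' := by
    rintro r x ⟨h1, h2⟩
    constructor
    · simp [Matrix.conjTranspose_smul, h1]
    · simp [Matrix.trace_smul, h2]
  lie_mem' := by
    rintro x y ⟨h1, h2⟩ ⟨g1, g2⟩
    constructor
    · simp only [Ring.lie_def, Matrix.conjTranspose_sub, Matrix.conjTranspose_mul, h1, g1]
      simp [Matrix.neg_mul, Matrix.mul_neg]
    · simp [Ring.lie_def, Matrix.trace_sub, Matrix.trace_mul_comm x y]

/-- the linear map A ↦ (A, xA, yA) from su(2) to su(2)³ -/
def tri (x y : ℝ) : su2 →ₗ[ℝ] su2 × su2 × su2 :=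
  LinearMap.prod LinearMap.id ((x • LinearMap.id).prod (y • LinearMap.id))

/-- the diagonal subalgebra h = {(C,C,C)} (as a subspace) -/
def hDiag : Submodule ℝ (su2 × su2 × su2) := LinearMap.range (tri 1 1)

/-- m₁ = {(A, aA, bA)} -/
def m₁ (a b : ℝ) : Submodule ℝ (su2 × su2 × su2) := LinearMap.range (tri a b)

/-- m₂ = {(B, cB, dB)} -/
def m₂ (c d : ℝ) : Submodule ℝ (su2 × su2 × su2) := LinearMap.range (tri c d)

lemma tri_apply (x y : ℝ) (A : su2) : tri x y A = (A, x • A, y • A) := rfl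

def EE : su2 := ⟨!![Complex.I, 0; 0, -Complex.I], by
  constructor
  · ext i j; fin_cases i <;> fin_cases j <;> simp [Matrix.conjTranspose_apply]
  · simp [Matrix.trace_fin_two]⟩

lemma EE_ne_zero : EE ≠ 0 := by
  intro h
  have : (EE : Matrix (Fin 2) (Fin 2) ℂ) 0 0 = 0 := by rw [h]; rfl
  simp [EE] at this

lemma mem_sup3 (a b c d : ℝ) (v : su2 × su2 × su2) :
    v ∈ hDiag ⊔ (m₁ a b ⊔ m₂ c d) ↔
      ∃ C A B : su2, (C + A + B, C + a • A + c • B, C + b • A + d • B) = v := by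
  constructor
  · intro hv
    rw [Submodule.mem_sup] at hv
    obtain ⟨y, hy, z, hz, hv⟩ := hv
    rw [Submodule.mem_sup] at hz
    obtain ⟨y1, hy1, y2, hy2, hz⟩ := hz
    obtain ⟨C, rfl⟩ := hy
    obtain ⟨A, rfl⟩ := hy1
    obtain ⟨B, rfl⟩ := hy2
    refine ⟨C, A, B, ?_⟩
    rw [← hv, ← hz]
    simp only [tri_apply, Prod.mk_add_mk, Prod.mk.injEq, one_smul]
    refine ⟨by abel, by abel, by abel⟩
  · rintro ⟨C, A, B, rfl⟩
    rw [Submodule.mem_sup]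
    refine ⟨tri 1 1 C, ⟨C, rfl⟩, tri a b A + tri c d B, ?_, ?_⟩
    · exact Submodule.add_mem_sup ⟨A, rfl⟩ ⟨B, rfl⟩
    · simp only [tri_apply, Prod.mk_add_mk, Prod.mk.injEq, one_smul]
      refine ⟨by abel, by abel, by abel⟩

set_option maxHeartbeats 1000000 in
theorem reductive_decomposition_iff_delta_ne_zero (a b c d : ℝ) :
    IsCompl hDiag (m₁ a b ⊔ m₂ c d)
      ↔ (a - 1) * (d - 1) - (b - 1) * (c - 1) ≠ 0 := by
  constructor
  · intro hcompl hΔ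
    by_cases hcase : a = c ∧ b = d
    · -- then m₂ = m₁ and codisjointness fails
      obtain ⟨hac, hbd⟩ := hcase
      have htop : hDiag ⊔ (m₁ a b ⊔ m₂ c d) = ⊤ := codisjoint_iff.mp hcompl.codisjoint
      by_cases ha : a = 1
      · -- target (0, EE, 0)
        have hc : c = 1 := hac ▸ ha
        have hmem : ((0 : su2), EE, (0 : su2)) ∈ hDiag ⊔ (m₁ a b ⊔ m₂ c d) := by
          rw [htop]; trivial
        rw [mem_sup3] at hmem
        obtain ⟨C, A, B, h⟩ := hmem
        simp only [Prod.mk.injEq] at h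
        obtain ⟨h1, h2, h3⟩ := h
        apply EE_ne_zero
        rw [← h2, ha, hc, one_smul, one_smul]
        exact h1
      · -- target (0, 0, EE)
        have hmem : ((0 : su2), (0 : su2), EE) ∈ hDiag ⊔ (m₁ a b ⊔ m₂ c d) := by
          rw [htop]; trivial
        rw [mem_sup3] at hmem
        obtain ⟨C, A, B, h⟩ := hmem
        simp only [Prod.mk.injEq] at h
        obtain ⟨h1, h2, h3⟩ := h
        rw [← hac] at h2
        rw [← hbd] at h3
        have hS : A + B = -C := by
          have h := h1; rw [add_assoc] at h
          exact eq_neg_of_add_eq_zero_right h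
        have hC1 : (1 - a) • C = 0 := by
          linear_combination (norm := module) h2 - a • hS
        have hC : C = 0 :=
          (smul_eq_zero.mp hC1).resolve_left (sub_ne_zero.mpr fun h => ha h.symm)
        apply EE_ne_zero
        rw [← h3]
        linear_combination (norm := module) b • hS + (1 - b) • hC
    · -- disjointness fails
      obtain ⟨α, β, hk1, hk2, hs⟩ :
          ∃ α β : ℝ, (a-1)*α + (c-1)*β = 0 ∧ (b-1)*α + (d-1)*β = 0 ∧ α + β ≠ 0 := by
        by_cases hac : a = c
        · have hbd : b ≠ d := fun h => hcase ⟨hac, h⟩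
          exact ⟨d - 1, 1 - b, by linear_combination hΔ, by ring,
            fun h => hbd (by linarith)⟩
        · exact ⟨c - 1, 1 - a, by ring, by linear_combination -hΔ,
            fun h => hac (by linarith)⟩
      set v : su2 × su2 × su2 := tri 1 1 ((α + β) • EE) with hv
      have hv1 : v ∈ hDiag := ⟨(α + β) • EE, rfl⟩
      have hv2 : v ∈ m₁ a b ⊔ m₂ c d := by
        rw [Submodule.mem_sup]
        refine ⟨tri a b (α • EE), ⟨α • EE, rfl⟩, tri c d (β • EE), ⟨β • EE, rfl⟩, ?_⟩
        rw [hv]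
        simp only [tri_apply, Prod.mk_add_mk, Prod.mk.injEq, one_smul]
        refine ⟨by rw [← add_smul], ?_, ?_⟩ <;>
          · rw [smul_smul, smul_smul, ← add_smul]
            congr 1
            linarith
      have hv0 : v = 0 := Submodule.disjoint_def.mp hcompl.disjoint v hv1 hv2
      have : (α + β) • EE = 0 := by
        have := congrArg Prod.fst hv0
        simpa [hv, tri_apply] using this
      exact EE_ne_zero ((smul_eq_zero.mp this).resolve_left hs)
  · intro hΔ
    constructor
    · rw [Submodule.disjoint_def]
      intro v hv hv'
      obtain ⟨C, rfl⟩ := hv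
      rw [Submodule.mem_sup] at hv'
      obtain ⟨y1, hy1, y2, hy2, hz⟩ := hv'
      obtain ⟨A, rfl⟩ := hy1
      obtain ⟨B, rfl⟩ := hy2
      have h1 : A + B = C := congrArg Prod.fst hz
      have h2 : a • A + c • B = C := by
        have := congrArg (fun p : su2 × su2 × su2 => p.2.1) hz
        simpa [tri_apply] using this
      have h3 : b • A + d • B = C := by
        have := congrArg (fun p : su2 × su2 × su2 => p.2.2) hz
        simpa [tri_apply] using this
      -- h1 : A + B = C, h2 : a•A + c•B = C, h3 : b•A + d•B = C
      have e1 : (a-1) • A + (c-1) • B = 0 := by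
        linear_combination (norm := module) h2 - h1
      have e2 : (b-1) • A + (d-1) • B = 0 := by
        linear_combination (norm := module) h3 - h1
      have hA : A = 0 := by
        have key : ((a - 1) * (d - 1) - (b - 1) * (c - 1)) • A = 0 := by
          linear_combination (norm := module) (d-1) • e1 - (c-1) • e2
        exact (smul_eq_zero.mp key).resolve_left hΔ
      have hB : B = 0 := by
        have key : ((a - 1) * (d - 1) - (b - 1) * (c - 1)) • B = 0 := by
          linear_combination (norm := module) (a-1) • e2 - (b-1) • e1
        exact (smul_eq_zero.mp key).resolve_left hΔ
      have hC : C = 0 := by rw [← h1, hA, hB, add_zero]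
      rw [tri_apply, hC]
      simp
    · rw [codisjoint_iff, Submodule.eq_top_iff']
      rintro ⟨X, Y, Z⟩
      rw [mem_sup3]
      set Δ := (a - 1) * (d - 1) - (b - 1) * (c - 1) with hΔdef
      set A : su2 := Δ⁻¹ • ((d-1) • (Y - X) - (c-1) • (Z - X)) with hA
      set B : su2 := Δ⁻¹ • ((a-1) • (Z - X) - (b-1) • (Y - X)) with hB
      refine ⟨X - A - B, A, B, ?_⟩
      have key1 : (a-1) • A + (c-1) • B = Y - X := by
        have h : (a-1) • A + (c-1) • B = Δ⁻¹ • (Δ • (Y - X)) := by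
          rw [hA, hB, hΔdef]; module
        rw [h, inv_smul_smul₀ hΔ]
      have key2 : (b-1) • A + (d-1) • B = Z - X := by
        have h : (b-1) • A + (d-1) • B = Δ⁻¹ • (Δ • (Z - X)) := by
          rw [hA, hB, hΔdef]; module
        rw [h, inv_smul_smul₀ hΔ]
      simp only [Prod.mk.injEq]
      refine ⟨by abel, ?_, ?_⟩
      · linear_combination (norm := module) key1
      · linear_combination (norm := module) key2

end
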